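/- Let P be a finite poset on [n] whose set of linear extensions is closed under (2-14-3 ↔ 2-41-3) and (3-14-2 ↔ 3-41-2) moves. Then P contains no 2-14-3, 3-14-2, 2-41-3, or 3-41-2 chains. -/

import Mathlib

/-- `σ` is a linear extension of the poset `P` on `[n]`. -/
def LinExt {n : ℕ} (P : PartialOrder (Fin n)) (σ : Equiv.Perm (Fin n)) : Prop :=
  ∀ a b : Fin n, P.lt a b → σ⁻¹ a < σ⁻¹ b

/-- The subsequence `σ_i σ_j σ_{j+1} σ_k` is an occurrence of one of the
vincular patterns 2-41-3, 2-14-3, 3-41-2, 3-14-2. -/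
def PatternOcc {n : ℕ} (σ : Equiv.Perm (Fin n)) (i : Fin n) (j : ℕ)
    (hj : j + 1 < n) (k : Fin n) : Prop :=
  (σ ⟨j + 1, hj⟩ < σ i ∧ σ i < σ k ∧ σ k < σ ⟨j, Nat.lt_of_succ_lt hj⟩) ∨
  (σ ⟨j, Nat.lt_of_succ_lt hj⟩ < σ i ∧ σ i < σ k ∧ σ k < σ ⟨j + 1, hj⟩) ∨
  (σ ⟨j + 1, hj⟩ < σ k ∧ σ k < σ i ∧ σ i < σ ⟨j, Nat.lt_of_succ_lt hj⟩) ∨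
  (σ ⟨j, Nat.lt_of_succ_lt hj⟩ < σ k ∧ σ k < σ i ∧ σ i < σ ⟨j + 1, hj⟩)

/-- `ψ` is obtained from `σ` by a (2-14-3 ↔ 2-41-3) or (3-14-2 ↔ 3-41-2)
move: swapping the two adjacent middle entries of an occurrence of one of
these vincular patterns. -/
def MoveRel {n : ℕ} (σ ψ : Equiv.Perm (Fin n)) : Prop :=
  ∃ (j : ℕ) (hj : j + 1 < n),
    ψ = σ * Equiv.swap ⟨j, Nat.lt_of_succ_lt hj⟩ ⟨j + 1, hj⟩ ∧
    ∃ i k : Fin n, i.1 < j ∧ j + 1 < k.1 ∧ PatternOcc σ i j hj k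

/-- Any strict total order on `Fin n` is realized by a permutation:
`σ⁻¹ x < σ⁻¹ y ↔ r x y`. -/
lemma aux_exists_perm {n : ℕ} (r : Fin n → Fin n → Prop)
    (h : IsStrictTotalOrder (Fin n) r) :
    ∃ σ : Equiv.Perm (Fin n), ∀ x y : Fin n, σ⁻¹ x < σ⁻¹ y ↔ r x y := by
  classical
  haveI := h
  haveI hdec : DecidableRel r := fun _ _ => Classical.dec _
  refine ⟨(@monoEquivOfFin (Fin n) _ (@linearOrderOfSTO _ r _ hdec) n
    (Fintype.card_fin n)).toEquiv, fun x y => ?_⟩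
  rw [Equiv.Perm.inv_def]
  exact @OrderIso.lt_iff_lt (Fin n) (Fin n) (@linearOrderOfSTO _ r _ hdec).toPreorder
    (inferInstance : Preorder (Fin n))
    (@OrderIso.symm (Fin n) (Fin n) instLEFin
      (@Preorder.toLE _ (@linearOrderOfSTO _ r _ hdec).toPreorder)
      (@monoEquivOfFin (Fin n) _ (@linearOrderOfSTO _ r _ hdec) n (Fintype.card_fin n))) x y

/-- If the set of linear extensions of a poset `P` on `[n]` is closed under
(2-14-3 ↔ 2-41-3) and (3-14-2 ↔ 3-41-2) moves, then `P` contains no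
2-14-3, 3-14-2, 2-41-3, or 3-41-2 chain. -/
theorem no_pattern_chains_of_closed_under_moves {n : ℕ}
    (P : PartialOrder (Fin n))
    (hclosed : ∀ σ ψ : Equiv.Perm (Fin n), LinExt P σ → MoveRel σ ψ → LinExt P ψ) :
    ¬ ∃ a b c d : Fin n,
      P.lt b a ∧ P.lt a d ∧ (∀ z : Fin n, ¬ (P.lt a z ∧ P.lt z d)) ∧ P.lt d c ∧
      ((a < b ∧ b < c ∧ c < d) ∨   -- 2-14-3 chain
       (a < c ∧ c < b ∧ b < d) ∨   -- 3-14-2 chain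
       (d < b ∧ b < c ∧ c < a) ∨   -- 2-41-3 chain
       (d < c ∧ c < b ∧ b < a)) := by  -- 3-41-2 chain
  classical
  rintro ⟨a, b, c, d, hba, had, hcov, hdc, hnum⟩
  -- basic facts about P
  have Ple : ∀ {x y : Fin n}, P.lt x y → P.le x y := fun h =>
    ((P.lt_iff_le_not_ge _ _).1 h).1
  have Pne : ∀ {x y : Fin n}, P.lt x y → x ≠ y := fun {x y} h hxy =>
    ((P.lt_iff_le_not_ge _ _).1 h).2 (hxy ▸ P.le_refl x)
  have Pltle : ∀ {x y z : Fin n}, P.lt x y → P.le y z → P.lt x z := by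
    intro x y z h1 h2
    rcases (P.lt_iff_le_not_ge _ _).1 h1 with ⟨h1a, h1b⟩
    refine (P.lt_iff_le_not_ge _ _).2 ⟨P.le_trans _ _ _ h1a h2, fun h3 => h1b ?_⟩
    exact P.le_trans _ _ _ h2 h3
  have Plelt : ∀ {x y z : Fin n}, P.le x y → P.lt y z → P.lt x z := by
    intro x y z h1 h2
    rcases (P.lt_iff_le_not_ge _ _).1 h2 with ⟨h2a, h2b⟩
    refine (P.lt_iff_le_not_ge _ _).2 ⟨P.le_trans _ _ _ h1 h2a, fun h3 => h2b ?_⟩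
    exact P.le_trans _ _ _ h3 h1
  have Pltgen : ∀ {x y : Fin n}, P.le x y → x ≠ y → P.lt x y := by
    intro x y h1 h2
    refine (P.lt_iff_le_not_ge _ _).2 ⟨h1, fun h3 => h2 (P.le_antisymm _ _ h1 h3)⟩
  -- anything P-between a and d (inclusive above) equals a
  have key : ∀ z : Fin n, P.le a z → P.lt z d → z = a := by
    intro z h1 h2
    by_contra hz
    exact hcov z ⟨Pltgen h1 (fun h => hz h.symm), h2⟩
  have hadne : a ≠ d := Pne had
  -- the auxiliary partial order rle
  set rle : Fin n → Fin n → Prop :=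
    fun x y => P.le x y ∨ (P.lt x d ∧ P.le a y) with hrledef
  haveI : IsRefl (Fin n) rle := ⟨fun x => Or.inl (P.le_refl x)⟩
  haveI : IsTrans (Fin n) rle := by
    constructor
    rintro x y z (h1 | ⟨h1, h1'⟩) (h2 | ⟨h2, h2'⟩)
    · exact Or.inl (P.le_trans _ _ _ h1 h2)
    · exact Or.inr ⟨Plelt h1 h2, h2'⟩
    · exact Or.inr ⟨h1, P.le_trans _ _ _ h1' h2⟩
    · have := key y h1' h2
      subst this
      exact Or.inr ⟨h1, h2'⟩
  haveI : IsPreorder (Fin n) rle := {}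
  haveI : IsAntisymm (Fin n) rle := by
    constructor
    rintro x y (h1 | ⟨h1, h1'⟩) (h2 | ⟨h2, h2'⟩)
    · exact P.le_antisymm _ _ h1 h2
    · have hy : y = a := key y (P.le_trans _ _ _ h2' h1) h2
      subst hy
      exact P.le_antisymm _ _ h1 h2'
    · have hx : x = a := key x (P.le_trans _ _ _ h1' h2) h1
      subst hx
      exact (P.le_antisymm _ _ h2 h1').symm
    · have hx : x = a := key x h2' h1
      have hy : y = a := key y h1' h2
      rw [hx, hy]
  haveI : IsPartialOrder (Fin n) rle := {}
  obtain ⟨s, hs, hrs⟩ := extend_partialOrder rle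
  haveI := hs
  have hss : ∀ {x y : Fin n}, rle x y → s x y := fun {x y} h => hrs x y h
  -- the collapsing map and the strict total order slt'
  set κ : Fin n → Fin n := fun x => if x = d then a else x with hκdef
  have hκd : κ d = a := by simp [hκdef]
  have hκ : ∀ {x : Fin n}, x ≠ d → κ x = x := by intro x h; simp [hκdef, h]
  set slt' : Fin n → Fin n → Prop :=
    fun x y => (s (κ x) (κ y) ∧ κ x ≠ κ y) ∨ (κ x = κ y ∧ x ≠ d ∧ y = d)
    with hsltdef
  haveI : IsIrrefl (Fin n) slt' := by
    constructor
    rintro x (⟨-, h⟩ | ⟨-, h1, h2⟩)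
    · exact h rfl
    · exact h1 h2
  haveI : IsTrans (Fin n) slt' := by
    constructor
    rintro x y z (⟨h1, h1'⟩ | ⟨h1, h1', h1''⟩) (⟨h2, h2'⟩ | ⟨h2, h2', h2''⟩)
    · refine Or.inl ⟨trans_of s h1 h2, fun h => ?_⟩
      exact h1' (antisymm_of s h1 (h ▸ h2))
    · exact Or.inl ⟨h2 ▸ h1, h2 ▸ h1'⟩
    · exact Or.inl ⟨h1 ▸ h2, h1 ▸ h2'⟩
    · exact absurd h1'' h2'
  haveI : IsTrichotomous (Fin n) slt' := by
    constructor
    intro x y hxy1 hxy2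
    suffices H : slt' x y ∨ x = y ∨ slt' y x by
      rcases H with H | H | H
      · exact absurd H hxy1
      · exact H
      · exact absurd H hxy2
    by_cases hk : κ x = κ y
    · by_cases hxy : x = y
      · exact Or.inr (Or.inl hxy)
      · by_cases hxd : x = d
        · have hy : y = a := by
            by_cases h : y = d
            · exact absurd (hxd.trans h.symm) hxy
            · have h2 := hκ h
              have h3 : κ x = a := by rw [hxd, hκd]
              rw [h2, h3] at hk; exact hk.symm
          refine Or.inr (Or.inr (Or.inr ⟨hk.symm, ?_, hxd⟩))
          rw [hy]; exact hadne
        · by_cases hyd : y = d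
          · exact Or.inl (Or.inr ⟨hk, hxd, hyd⟩)
          · exact absurd ((hκ hxd).symm.trans (hk.trans (hκ hyd))) hxy
    · rcases total_of s (κ x) (κ y) with h | h
      · exact Or.inl (Or.inl ⟨h, hk⟩)
      · exact Or.inr (Or.inr (Or.inl ⟨h, fun hh => hk hh.symm⟩))
  haveI : IsStrictOrder (Fin n) slt' := {}
  haveI hSTO : IsStrictTotalOrder (Fin n) slt' := {}
  -- P.lt implies slt'
  have hPslt : ∀ {x y : Fin n}, P.lt x y → slt' x y := by
    intro x y h
    by_cases hyd : y = d
    · by_cases hxa : x = a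
      · refine Or.inr ⟨?_, ?_, hyd⟩
        · rw [hxa, hκ hadne, hyd, hκd]
        · rw [hxa]; exact hadne
      · have hxd : x ≠ d := fun hh => Pne h (hh.trans hyd.symm)
        refine Or.inl ⟨?_, ?_⟩
        · rw [hκ hxd, hyd, hκd]
          exact hss (Or.inr ⟨hyd ▸ h, P.le_refl a⟩)
        · rw [hκ hxd, hyd, hκd]; exact hxa
    · by_cases hxd : x = d
      · have hay : P.lt a y := Pltle had (hxd ▸ Ple h)
        refine Or.inl ⟨?_, ?_⟩
        · rw [hxd, hκd, hκ hyd]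
          exact hss (Or.inl (Ple hay))
        · rw [hxd, hκd, hκ hyd]; exact Pne hay
      · refine Or.inl ⟨?_, ?_⟩
        · rw [hκ hxd, hκ hyd]
          exact hss (Or.inl (Ple h))
        · rw [hκ hxd, hκ hyd]; exact Pne h
  -- nothing lies slt'-between a and d
  have hadj : ∀ z : Fin n, slt' a z → slt' z d → False := by
    rintro z (⟨h1, h1'⟩ | ⟨h1, h1', h1''⟩) h2
    · rcases h2 with ⟨h2, h2'⟩ | ⟨h2, h2', h2''⟩
      · rw [hκd] at h2 h2'
        rw [hκ hadne] at h1 h1'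
        exact h1' (antisymm_of s h1 h2)
      · rw [hκd] at h2
        rw [hκ hadne, h2] at h1'
        exact h1' rfl
    · subst h1''
      rcases h2 with ⟨-, h2'⟩ | ⟨-, h2', -⟩
      · exact h2' rfl
      · exact h2' rfl
  -- realize slt' by a permutation
  obtain ⟨σ, hσ⟩ := aux_exists_perm slt' hSTO
  have hLE : LinExt P σ := fun x y h => (hσ x y).2 (hPslt h)
  -- positions
  have hja_lt_jd : σ⁻¹ a < σ⁻¹ d := (hσ a d).2 (hPslt had)
  set j : ℕ := (σ⁻¹ a).1 with hjdef
  have hjd : (σ⁻¹ d).1 = j + 1 := by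
    rcases Nat.lt_or_ge (j + 1) (σ⁻¹ d).1 with h | h
    · exfalso
      have hm : j + 1 < n := lt_trans h (σ⁻¹ d).isLt
      set m : Fin n := ⟨j + 1, hm⟩ with hmdef
      have h1 : σ⁻¹ a < m := by
        show j < j + 1; omega
      have h2 : m < σ⁻¹ d := by
        show j + 1 < (σ⁻¹ d).1; exact h
      have h1' : slt' a (σ m) := by
        refine (hσ a (σ m)).1 ?_
        rwa [show σ⁻¹ (σ m) = m from σ.symm_apply_apply m]
      have h2' : slt' (σ m) d := by
        refine (hσ (σ m) d).1 ?_
        rwa [show σ⁻¹ (σ m) = m from σ.symm_apply_apply m]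
      exact hadj (σ m) h1' h2'
    · have : j < (σ⁻¹ d).1 := hja_lt_jd
      omega
  have hj : j + 1 < n := hjd ▸ (σ⁻¹ d).isLt
  have hfa : (⟨j, Nat.lt_of_succ_lt hj⟩ : Fin n) = σ⁻¹ a := Fin.ext rfl
  have hfd : (⟨j + 1, hj⟩ : Fin n) = σ⁻¹ d := Fin.ext hjd.symm
  have eσa : σ ⟨j, Nat.lt_of_succ_lt hj⟩ = a := by rw [hfa]; exact σ.apply_symm_apply a
  have eσd : σ ⟨j + 1, hj⟩ = d := by rw [hfd]; exact σ.apply_symm_apply d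
  set i : Fin n := σ⁻¹ b with hidef
  set k : Fin n := σ⁻¹ c with hkdef
  have eσi : σ i = b := σ.apply_symm_apply b
  have eσk : σ k = c := σ.apply_symm_apply c
  have hij : i.1 < j := (hσ b a).2 (hPslt hba)
  have hjk : j + 1 < k.1 := by
    have := (hσ d c).2 (hPslt hdc)
    rw [Fin.lt_def, hjd] at this
    exact this
  -- the move
  set ψ : Equiv.Perm (Fin n) :=
    σ * Equiv.swap ⟨j, Nat.lt_of_succ_lt hj⟩ ⟨j + 1, hj⟩ with hψdef
  have hmove : MoveRel σ ψ := by
    refine ⟨j, hj, rfl, i, k, hij, hjk, ?_⟩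
    unfold PatternOcc
    rw [eσa, eσd, eσi, eσk]
    rcases hnum with ⟨h1, h2, h3⟩ | ⟨h1, h2, h3⟩ | ⟨h1, h2, h3⟩ | ⟨h1, h2, h3⟩
    · exact Or.inr (Or.inl ⟨h1, h2, h3⟩)
    · exact Or.inr (Or.inr (Or.inr ⟨h1, h2, h3⟩))
    · exact Or.inl ⟨h1, h2, h3⟩
    · exact Or.inr (Or.inr (Or.inl ⟨h1, h2, h3⟩))
  have hψLE := hclosed σ ψ hLE hmove
  have hlt := hψLE a d had
  have hψa : ψ⁻¹ a = ⟨j + 1, hj⟩ := by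
    rw [hψdef, mul_inv_rev]
    simp only [Equiv.Perm.mul_apply]
    rw [← hfa, Equiv.swap_inv, Equiv.swap_apply_left]
  have hψd : ψ⁻¹ d = ⟨j, Nat.lt_of_succ_lt hj⟩ := by
    rw [hψdef, mul_inv_rev]
    simp only [Equiv.Perm.mul_apply]
    rw [← hfd, Equiv.swap_inv, Equiv.swap_apply_right]
  rw [hψa, hψd, Fin.lt_def] at hlt
  omega
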